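/- For every integer j ≥ t̄+1, the following identity holds: β·Σ_{l=max(0, j−2t̄)}^{j−1−t̄} φ(l) + φ(j−t̄) = φ(0) − λ_e·Σ_{l=0}^{j−1−t̄} φ(l). -/
import Mathlib


open Filter

/-- identity for the forcing term of the `ω` recursion. -/
theorem theta_identity
    (lam lam_e : ℝ) (hlam0 : 0 < lam) (hlam1 : lam < 1)
    (hle0 : 0 < lam_e) (hle1 : lam_e < 1)
    (tbar : ℕ)
    (φ : ℕ → ℝ)
    (hφ0 : φ 0 = lam * lam_e / (lam * (tbar : ℝ) + 1))
    (hφ1 : ∀ j, j < tbar → φ (j + 1) = (1 - lam) * (1 - lam_e) * φ j)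
    (hφ2 : ∀ j, tbar ≤ j → φ (j + 1) =
      (1 - lam) * (1 - lam_e) * φ j + lam * (1 - lam_e) * φ (j - tbar)) :
    ∀ j : ℕ, tbar + 1 ≤ j →
      lam * (1 - lam_e) * ∑ l ∈ Finset.Icc (j - 2 * tbar) (j - 1 - tbar), φ l
        + φ (j - tbar)
      = φ 0 - lam_e * ∑ l ∈ Finset.range (j - tbar), φ l := by
  have key : ∀ m : ℕ, 1 ≤ m →
      lam * (1 - lam_e) *
          ((∑ l ∈ Finset.range m, φ l) - ∑ l ∈ Finset.range (m - tbar), φ l) + φ m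
        = φ 0 - lam_e * ∑ l ∈ Finset.range m, φ l := by
    intro m hm
    induction m, hm using Nat.le_induction with
    | base =>
      rcases Nat.eq_zero_or_pos tbar with h | h
      · subst h
        have h2 := hφ2 0 (le_refl 0)
        simp only [Nat.sub_zero, Finset.sum_range_one] at *
        linear_combination h2
      · have h10 : 1 - tbar = 0 := by omega
        rw [h10]
        have h1 := hφ1 0 h
        simp only [Finset.sum_range_zero, Finset.sum_range_one] at *
        linear_combination h1
    | succ m hm ih =>
      rw [Finset.sum_range_succ]
      rcases le_or_gt tbar m with h | h
      · have e1 : m + 1 - tbar = (m - tbar) + 1 := by omega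
        rw [e1, Finset.sum_range_succ, hφ2 m h]
        linear_combination ih
      · have e1 : m + 1 - tbar = 0 := by omega
        have e2 : m - tbar = 0 := by omega
        rw [e2] at ih
        rw [e1, hφ1 m h]
        linear_combination ih
  intro j hj
  have e1 : j - 2 * tbar = j - tbar - tbar := by omega
  have e3 : Finset.Icc (j - 2 * tbar) (j - 1 - tbar)
      = Finset.Ico (j - tbar - tbar) (j - tbar) := by
    rw [← Finset.Ico_add_one_right_eq_Icc]
    congr 1 <;> omega
  rw [e3, Finset.sum_Ico_eq_sub φ (Nat.sub_le (j - tbar) tbar)]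
  exact key (j - tbar) (by omega)
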